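/- arXiv:2209.01689 — 3 statements merged into one kernel-verified Lean document; each statement's English description precedes it below -/
import Mathlib

section
/- Let X ≥ 1 and let s = σ + it be complex. Then |ζ_X(s)| ≤ ζ_X(σ), and moreover: if θ < σ < 1 then ζ_X(σ) ≤ min( κ·X^(1−σ)/(1−σ) + A/(σ−θ), κ·X^(1−σ)·log X + A/(σ−θ) ); if σ = 1 then ζ_X(1) ≤ κ·log X + A/(1−θ); and if σ > 1 then ζ_X(σ) ≤ min( σ·(A+κ)/(σ−1), κ·log X + σ·A/(σ−θ) ). -/
open scoped BigOperators Real

/-- The multiplicative norm on the Beurling generalized integers `ℕ →₀ ℕ`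
generated by the primes `q i`. -/
noncomputable def bNorm (q : ℕ → ℝ) (g : ℕ →₀ ℕ) : ℝ :=
  g.prod fun i k => q i ^ k

/-- The integer counting function `N(x)`. -/
noncomputable def bN (q : ℕ → ℝ) (x : ℝ) : ℕ :=
  {g : ℕ →₀ ℕ | bNorm q g ≤ x}.ncard

/-- The remainder `R(x) = N(x) - κ(x-1)`. -/
noncomputable def bR (q : ℕ → ℝ) (κ : ℝ) (x : ℝ) : ℝ :=
  (bN q x : ℝ) - κ * (x - 1)

/-- The Beurling zeta function, via the analytic continuation formula
`ζ(s) = κ/(s-1) + s ∫_1^∞ R(x) x^(-s-1) dx`. -/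
noncomputable def bZeta (q : ℕ → ℝ) (κ : ℝ) (s : ℂ) : ℂ :=
  (κ : ℂ) / (s - 1) + s * ∫ x in Set.Ioi (1 : ℝ), (bR q κ x : ℂ) * (x : ℂ) ^ (-s - 1)

/-- The partial sums `ζ_X(s) = ∑_{‖g‖ ≤ X} ‖g‖^{-s}`. -/
noncomputable def bZetaX (q : ℕ → ℝ) (X : ℝ) (s : ℂ) : ℂ :=
  ∑ᶠ g ∈ {g : ℕ →₀ ℕ | bNorm q g ≤ X}, (bNorm q g : ℂ) ^ (-s)

lemma one_le_bNorm (q : ℕ → ℝ) (hq : ∀ i, 1 < q i) (g : ℕ →₀ ℕ) : 1 ≤ bNorm q g := by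
  rw [bNorm, Finsupp.prod]
  calc (1:ℝ) = ∏ _i ∈ g.support, 1 := by simp
    _ ≤ ∏ i ∈ g.support, q i ^ g i :=
      Finset.prod_le_prod (by intros; norm_num) (fun i _ => one_le_pow₀ (hq i).le)

lemma J_eval {X σ : ℝ} (hX : 1 ≤ X) (hσ : σ ≠ 1) :
    ∫ x in (1:ℝ)..X, x ^ (-σ) = (X ^ (1 - σ) - 1) / (1 - σ) := by
  have h0 : (0:ℝ) ∉ Set.uIcc (1:ℝ) X := by
    rw [Set.uIcc_of_le hX]; exact fun h => absurd h.1 (by norm_num)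
  rw [integral_rpow (Or.inr ⟨by intro h; apply hσ; linarith, h0⟩)]
  norm_num [Real.one_rpow]
  ring_nf

lemma J_eval1 {X : ℝ} (hX : 1 ≤ X) :
    ∫ x in (1:ℝ)..X, x ^ (-(1:ℝ)) = Real.log X := by
  have h0 : (0:ℝ) ∉ Set.uIcc (1:ℝ) X := by
    rw [Set.uIcc_of_le hX]; exact fun h => absurd h.1 (by norm_num)
  rw [intervalIntegral.integral_congr (g := fun x : ℝ => x⁻¹)
    (fun x hx => Real.rpow_neg_one x), integral_inv h0, div_one]

/-- Key Abel-summation upper bound. -/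
lemma abel_bound (q : ℕ → ℝ) (hq : ∀ i, 1 < q i)
    (hfin : ∀ x : ℝ, {g : ℕ →₀ ℕ | bNorm q g ≤ x}.Finite)
    (κ A θ : ℝ) (hκ : 0 < κ) (hA : 0 < A) (hθ0 : 0 < θ) (hθ1 : θ < 1)
    (hAxiomA : ∀ x : ℝ, 1 ≤ x → |bR q κ x| ≤ A * x ^ θ)
    (X : ℝ) (hX : 1 ≤ X) (σ : ℝ) (hσθ : θ < σ) :
    ∑ g ∈ (hfin X).toFinset, bNorm q g ^ (-σ) ≤
      κ * (∫ x in (1:ℝ)..X, x ^ (-σ)) + σ * A / (σ - θ) := by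
  have hσ : 0 < σ := hθ0.trans hσθ
  have hX0 : (0:ℝ) < X := lt_of_lt_of_le one_pos hX
  set T := (hfin X).toFinset with hT
  have h0X : (0:ℝ) ∉ Set.uIcc (1:ℝ) X := by
    rw [Set.uIcc_of_le hX]; exact fun h => absurd h.1 (by norm_num)
  have hii : ∀ r : ℝ, IntervalIntegrable (fun x : ℝ => x ^ r) MeasureTheory.volume 1 X :=
    fun r => intervalIntegral.intervalIntegrable_rpow (Or.inr h0X)
  have hnorm1 : ∀ g : ℕ →₀ ℕ, 1 ≤ bNorm q g := one_le_bNorm q hq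
  have hN : ∀ x : ℝ, 1 ≤ x → (bN q x : ℝ) ≤ κ * (x - 1) + A * x ^ θ := by
    intro x hx
    have h := (abs_le.1 (hAxiomA x hx)).2
    rw [bR] at h; linarith
  have hfint : MeasureTheory.IntegrableOn (fun x : ℝ => x ^ (-σ - 1))
      (Set.Ioc 1 X) MeasureTheory.volume := (hii (-σ - 1)).1
  -- pointwise Abel identity
  have hid : ∀ g ∈ T, bNorm q g ^ (-σ)
      = X ^ (-σ) + σ * ∫ x in Set.Ioc (bNorm q g) X, x ^ (-σ - 1) := by
    intro g hg
    have hgX : bNorm q g ≤ X := by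
      have := (Set.Finite.mem_toFinset (hfin X)).1 hg
      exact this
    have h0g : (0:ℝ) ∉ Set.uIcc (bNorm q g) X := by
      rw [Set.uIcc_of_le hgX]
      exact fun h => absurd h.1 (by nlinarith [hnorm1 g])
    have hev : ∫ x in (bNorm q g)..X, x ^ (-σ - 1)
        = (X ^ (-σ - 1 + 1) - bNorm q g ^ (-σ - 1 + 1)) / (-σ - 1 + 1) :=
      integral_rpow (Or.inr ⟨by intro h; nlinarith, h0g⟩)
    rw [intervalIntegral.integral_of_le hgX] at hev
    rw [hev]
    have e : -σ - 1 + 1 = -σ := by ring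
    rw [e]
    have hσne : σ ≠ 0 := ne_of_gt hσ
    rw [div_neg, mul_neg, mul_div_assoc']
    field_simp
    ring
  have hsum : ∑ g ∈ T, bNorm q g ^ (-σ)
      = (T.card : ℝ) * X ^ (-σ)
        + σ * ∑ g ∈ T, ∫ x in Set.Ioc (bNorm q g) X, x ^ (-σ - 1) := by
    rw [Finset.sum_congr rfl hid, Finset.sum_add_distrib, Finset.sum_const,
      nsmul_eq_mul, Finset.mul_sum]
  have hswap : ∑ g ∈ T, ∫ x in Set.Ioc (bNorm q g) X, x ^ (-σ - 1)
      = ∫ x in Set.Ioc (1:ℝ) X,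
          ∑ g ∈ T, (Set.Ioc (bNorm q g) X).indicator (fun x => x ^ (-σ - 1)) x := by
    rw [MeasureTheory.integral_finset_sum T
      (fun g _ => hfint.indicator measurableSet_Ioc)]
    refine Finset.sum_congr rfl fun g _ => ?_
    rw [MeasureTheory.setIntegral_indicator measurableSet_Ioc,
      Set.inter_eq_self_of_subset_right (Set.Ioc_subset_Ioc_left (hnorm1 g))]
  have hRHSint : MeasureTheory.IntegrableOn
      (fun x : ℝ => (κ * (x - 1) + A * x ^ θ) * x ^ (-σ - 1))
      (Set.Ioc 1 X) MeasureTheory.volume := by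
    have hc : ContinuousOn (fun x : ℝ => (κ * (x - 1) + A * x ^ θ) * x ^ (-σ - 1))
        (Set.Icc 1 X) := by
      have hpos : ∀ x ∈ Set.Icc (1:ℝ) X, x ≠ 0 ∨ (0:ℝ) < θ := fun x _ => Or.inr hθ0
      refine ContinuousOn.mul (ContinuousOn.add (by fun_prop) ?_) ?_
      · exact ContinuousOn.mul continuousOn_const
          (ContinuousOn.rpow_const continuousOn_id
            (fun x hx => Or.inl (by intro h; rw [h] at hx; exact absurd hx.1 (by norm_num))))
      · exact ContinuousOn.rpow_const continuousOn_id
          (fun x hx => Or.inl (by intro h; rw [h] at hx; exact absurd hx.1 (by norm_num)))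
    exact (hc.integrableOn_compact isCompact_Icc).mono_set Set.Ioc_subset_Icc_self
  have hmono : (∫ x in Set.Ioc (1:ℝ) X,
        ∑ g ∈ T, (Set.Ioc (bNorm q g) X).indicator (fun x => x ^ (-σ - 1)) x)
      ≤ ∫ x in Set.Ioc (1:ℝ) X, (κ * (x - 1) + A * x ^ θ) * x ^ (-σ - 1) := by
    refine MeasureTheory.setIntegral_mono_on
      (MeasureTheory.integrable_finset_sum T
        (fun g _ => hfint.indicator measurableSet_Ioc)) hRHSint measurableSet_Ioc ?_
    intro x hx
    have hx1 : (1:ℝ) < x := hx.1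
    have hx0 : (0:ℝ) < x := lt_trans one_pos hx1
    have hfx : 0 ≤ x ^ (-σ - 1) := Real.rpow_nonneg hx0.le _
    have hcount : ∑ g ∈ T, (Set.Ioc (bNorm q g) X).indicator (fun x => x ^ (-σ - 1)) x
        = ((T.filter fun g => bNorm q g < x).card : ℝ) * x ^ (-σ - 1) := by
      rw [show ∑ g ∈ T, (Set.Ioc (bNorm q g) X).indicator (fun x => x ^ (-σ - 1)) x
          = ∑ g ∈ T, if bNorm q g < x then x ^ (-σ - 1) else 0 from
        Finset.sum_congr rfl fun g _ => by
          simp [Set.indicator_apply, Set.mem_Ioc, hx.2]]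
      rw [Finset.sum_ite, Finset.sum_const, Finset.sum_const_zero, add_zero, nsmul_eq_mul]
    rw [hcount]
    refine mul_le_mul_of_nonneg_right ?_ hfx
    have hsub : (T.filter fun g => bNorm q g < x) ⊆ (hfin x).toFinset := by
      intro g hgm
      rw [Set.Finite.mem_toFinset]
      exact le_of_lt (Finset.mem_filter.1 hgm).2
    have h1 : ((T.filter fun g => bNorm q g < x).card : ℝ)
        ≤ ((hfin x).toFinset.card : ℝ) := by
      exact_mod_cast Finset.card_le_card hsub
    have h2 : ((hfin x).toFinset.card : ℝ) = (bN q x : ℝ) := by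
      rw [bN, Set.ncard_eq_toFinset_card _ (hfin x)]
    calc ((T.filter fun g => bNorm q g < x).card : ℝ)
        ≤ (bN q x : ℝ) := by rw [← h2]; exact h1
      _ ≤ κ * (x - 1) + A * x ^ θ := hN x hx1.le
  have hconv : ∫ x in Set.Ioc (1:ℝ) X, (κ * (x - 1) + A * x ^ θ) * x ^ (-σ - 1)
      = κ * ((∫ x in (1:ℝ)..X, x ^ (-σ)) - ∫ x in (1:ℝ)..X, x ^ (-σ - 1))
        + A * ∫ x in (1:ℝ)..X, x ^ (θ - σ - 1) := by
    rw [← intervalIntegral.integral_of_le hX]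
    rw [intervalIntegral.integral_congr
      (g := fun x : ℝ => κ * (x ^ (-σ) - x ^ (-σ - 1)) + A * x ^ (θ - σ - 1)) ?_]
    · rw [intervalIntegral.integral_add (((hii (-σ)).sub (hii (-σ-1))).const_mul κ)
        ((hii (θ-σ-1)).const_mul A),
        intervalIntegral.integral_const_mul, intervalIntegral.integral_const_mul,
        intervalIntegral.integral_sub (hii (-σ)) (hii (-σ-1))]
    · intro x hx
      rw [Set.uIcc_of_le hX] at hx
      have hx0 : (0:ℝ) < x := lt_of_lt_of_le one_pos hx.1
      have e1 : x * x ^ (-σ - 1) = x ^ (-σ) := by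
        have h := Real.rpow_add hx0 1 (-σ - 1)
        rw [Real.rpow_one] at h
        rw [← h]
        congr 1
        ring
      have e2 : x ^ θ * x ^ (-σ - 1) = x ^ (θ - σ - 1) := by
        rw [← Real.rpow_add hx0]
        congr 1
        ring
      simp only []
      calc (κ * (x - 1) + A * x ^ θ) * x ^ (-σ - 1)
          = κ * (x * x ^ (-σ - 1) - x ^ (-σ - 1)) + A * (x ^ θ * x ^ (-σ - 1)) := by ring
        _ = κ * (x ^ (-σ) - x ^ (-σ - 1)) + A * x ^ (θ - σ - 1) := by rw [e1, e2]
  -- evaluate the auxiliary integrals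
  have hI2 : ∫ x in (1:ℝ)..X, x ^ (-σ - 1) = (X ^ (-σ) - 1) / (-σ) := by
    have := integral_rpow (a := 1) (b := X) (r := -σ - 1)
      (Or.inr ⟨by intro h; nlinarith, h0X⟩)
    rw [this]
    norm_num
  have hI3 : ∫ x in (1:ℝ)..X, x ^ (θ - σ - 1) = (X ^ (θ - σ) - 1) / (θ - σ) := by
    have := integral_rpow (a := 1) (b := X) (r := θ - σ - 1)
      (Or.inr ⟨by intro h; nlinarith, h0X⟩)
    rw [this]
    norm_num
  -- κ-part identity : (X-1) X^{-σ} = (1-σ) I₁ + σ I₂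
  have hkappa : (X - 1) * X ^ (-σ)
      = (1 - σ) * (∫ x in (1:ℝ)..X, x ^ (-σ)) + σ * ((X ^ (-σ) - 1) / (-σ)) := by
    rcases eq_or_ne σ 1 with h1 | h1
    · subst h1
      rw [J_eval1 hX]
      have : X ^ (-(1:ℝ)) = X⁻¹ := Real.rpow_neg_one X
      rw [this]
      have hXne : X ≠ 0 := ne_of_gt hX0
      rw [div_neg, mul_neg, mul_div_assoc']
      field_simp
      ring
    · rw [J_eval hX h1]
      have e : X ^ (1 - σ) = X * X ^ (-σ) := by
        have h := Real.rpow_add hX0 1 (-σ)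
        rw [Real.rpow_one] at h
        rw [← h, show 1 + -σ = 1 - σ by ring]
      have h1σ : (1:ℝ) - σ ≠ 0 := by intro h; apply h1; linarith
      have hσne : σ ≠ 0 := ne_of_gt hσ
      rw [e, div_neg, mul_neg, mul_div_assoc']
      field_simp
      ring
  -- card bound
  have hcardX : ((T.card : ℝ)) ≤ κ * (X - 1) + A * X ^ θ := by
    have h2 : ((hfin X).toFinset.card : ℝ) = (bN q X : ℝ) := by
      rw [bN, Set.ncard_eq_toFinset_card _ (hfin X)]
    rw [hT, h2]
    exact hN X hX
  have hXσ : (0:ℝ) ≤ X ^ (-σ) := Real.rpow_nonneg hX0.le _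
  have hXθσ : X ^ θ * X ^ (-σ) = X ^ (θ - σ) := by
    rw [← Real.rpow_add hX0]; ring_nf
  have hy1 : X ^ (θ - σ) ≤ 1 :=
    Real.rpow_le_one_of_one_le_of_nonpos hX (by linarith)
  have hy0 : 0 < X ^ (θ - σ) := Real.rpow_pos_of_pos hX0 _
  have hσθ' : 0 < σ - θ := by linarith
  -- A-part inequality
  have hApart : A * X ^ (θ - σ) + σ * (A * ((X ^ (θ - σ) - 1) / (θ - σ)))
      ≤ σ * A / (σ - θ) := by
    have key : σ * A / (σ - θ)
        - (A * X ^ (θ - σ) + σ * (A * ((X ^ (θ - σ) - 1) / (θ - σ))))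
        = A * θ * X ^ (θ - σ) / (σ - θ) := by
      have hθσne : θ - σ ≠ 0 := by intro h; linarith
      have hσθne : σ - θ ≠ 0 := ne_of_gt hσθ'
      field_simp
      ring
    nlinarith [div_nonneg (mul_nonneg (mul_nonneg hA.le hθ0.le) hy0.le) hσθ'.le]
  calc ∑ g ∈ T, bNorm q g ^ (-σ)
      = (T.card : ℝ) * X ^ (-σ)
        + σ * ∑ g ∈ T, ∫ x in Set.Ioc (bNorm q g) X, x ^ (-σ - 1) := hsum
    _ ≤ (κ * (X - 1) + A * X ^ θ) * X ^ (-σ)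
        + σ * (κ * ((∫ x in (1:ℝ)..X, x ^ (-σ)) - ∫ x in (1:ℝ)..X, x ^ (-σ - 1))
          + A * ∫ x in (1:ℝ)..X, x ^ (θ - σ - 1)) := by
        rw [hswap] at *
        have := hmono
        rw [hconv] at this
        have h2 := mul_le_mul_of_nonneg_right hcardX hXσ
        nlinarith [this]
    _ ≤ κ * (∫ x in (1:ℝ)..X, x ^ (-σ)) + σ * A / (σ - θ) := by
        rw [hI2, hI3]
        have expand : (κ * (X - 1) + A * X ^ θ) * X ^ (-σ)
            + σ * (κ * ((∫ x in (1:ℝ)..X, x ^ (-σ)) - (X ^ (-σ) - 1) / (-σ))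
              + A * ((X ^ (θ - σ) - 1) / (θ - σ)))
            = (κ * ((X - 1) * X ^ (-σ)
                + σ * (∫ x in (1:ℝ)..X, x ^ (-σ)) - σ * ((X ^ (-σ) - 1) / (-σ))))
              + (A * X ^ (θ - σ) + σ * (A * ((X ^ (θ - σ) - 1) / (θ - σ)))) := by
          rw [← hXθσ]; ring
        rw [expand]
        have hk2 : κ * ((X - 1) * X ^ (-σ)
            + σ * (∫ x in (1:ℝ)..X, x ^ (-σ)) - σ * ((X ^ (-σ) - 1) / (-σ)))
            = κ * (∫ x in (1:ℝ)..X, x ^ (-σ)) := by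
          rw [hkappa]; ring
        rw [hk2]
        linarith [hApart]

theorem statement_3
    (q : ℕ → ℝ) (hq : ∀ i, 1 < q i)
    (hfin : ∀ x : ℝ, {g : ℕ →₀ ℕ | bNorm q g ≤ x}.Finite)
    (κ A θ : ℝ) (hκ : 0 < κ) (hA : 0 < A) (hθ0 : 0 < θ) (hθ1 : θ < 1)
    (hAxiomA : ∀ x : ℝ, 1 ≤ x → |bR q κ x| ≤ A * x ^ θ)
    (X : ℝ) (hX : 1 ≤ X) (s : ℂ) :
    ‖bZetaX q X s‖ ≤ (bZetaX q X (s.re : ℂ)).re ∧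
    (θ < s.re → s.re < 1 →
      (bZetaX q X (s.re : ℂ)).re ≤
        min (κ * X ^ (1 - s.re) / (1 - s.re) + A / (s.re - θ))
          (κ * X ^ (1 - s.re) * Real.log X + A / (s.re - θ))) ∧
    (s.re = 1 → (bZetaX q X (s.re : ℂ)).re ≤ κ * Real.log X + A / (1 - θ)) ∧
    (1 < s.re →
      (bZetaX q X (s.re : ℂ)).re ≤
        min (s.re * (A + κ) / (s.re - 1)) (κ * Real.log X + s.re * A / (s.re - θ))) := by
  set σ := s.re with hσdef
  set T := (hfin X).toFinset with hT
  have hnorm1 : ∀ g : ℕ →₀ ℕ, 1 ≤ bNorm q g := one_le_bNorm q hq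
  have hnorm0 : ∀ g : ℕ →₀ ℕ, 0 < bNorm q g := fun g => lt_of_lt_of_le one_pos (hnorm1 g)
  have hfinsum : ∀ t : ℂ, bZetaX q X t = ∑ g ∈ T, (bNorm q g : ℂ) ^ (-t) := by
    intro t
    exact finsum_mem_eq_finite_toFinset_sum _ (hfin X)
  have hre : (bZetaX q X (σ : ℂ)).re = ∑ g ∈ T, bNorm q g ^ (-σ) := by
    rw [hfinsum, Complex.re_sum]
    refine Finset.sum_congr rfl fun g _ => ?_
    rw [show -(σ:ℂ) = ((-σ : ℝ) : ℂ) by push_cast; ring,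
      ← Complex.ofReal_cpow (hnorm0 g).le, Complex.ofReal_re]
  have habs : ‖bZetaX q X s‖ ≤ (bZetaX q X (σ : ℂ)).re := by
    rw [hre, hfinsum]
    refine le_trans (norm_sum_le _ _) (le_of_eq (Finset.sum_congr rfl fun g _ => ?_))
    rw [Complex.norm_cpow_eq_rpow_re_of_pos (hnorm0 g)]
    simp
    rfl
  have hX0 : (0:ℝ) < X := lt_of_lt_of_le one_pos hX
  refine ⟨habs, ?_, ?_, ?_⟩
  · -- θ < σ < 1
    intro h1 h2
    rw [hre]
    have hb := abel_bound q hq hfin κ A θ hκ hA hθ0 hθ1 hAxiomA X hX σ h1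
    rw [J_eval hX (ne_of_lt h2)] at hb
    have h1σ : (0:ℝ) < 1 - σ := by linarith
    have hσθ' : (0:ℝ) < σ - θ := by linarith
    have hAineq : σ * A / (σ - θ) ≤ A / (σ - θ) :=
      (div_le_div_iff_of_pos_right hσθ').mpr (by nlinarith)
    have ht1 : (1:ℝ) ≤ X ^ (1 - σ) := Real.one_le_rpow hX (by linarith)
    have ht0 : (0:ℝ) < X ^ (1 - σ) := lt_of_lt_of_le one_pos ht1
    refine le_min ?_ ?_
    · have hk : κ * ((X ^ (1 - σ) - 1) / (1 - σ)) ≤ κ * X ^ (1 - σ) / (1 - σ) := by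
        rw [mul_div_assoc]
        exact mul_le_mul_of_nonneg_left
          ((div_le_div_iff_of_pos_right h1σ).mpr (by linarith)) hκ.le
      linarith
    · -- (t-1)/(1-σ) ≤ t log X with t = X^{1-σ}
      have hlt : Real.log (X ^ (1 - σ)) = (1 - σ) * Real.log X :=
        Real.log_rpow hX0 _
      have hlog : Real.log (X ^ (1 - σ))⁻¹ ≤ (X ^ (1 - σ))⁻¹ - 1 :=
        Real.log_le_sub_one_of_pos (inv_pos.2 ht0)
      rw [Real.log_inv] at hlog
      have hinv : X ^ (1 - σ) * (X ^ (1 - σ))⁻¹ = 1 := mul_inv_cancel₀ (ne_of_gt ht0)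
      have key : X ^ (1 - σ) - 1 ≤ X ^ (1 - σ) * Real.log (X ^ (1 - σ)) := by
        nlinarith [mul_le_mul_of_nonneg_left hlog ht0.le]
      rw [hlt] at key
      have hk : (X ^ (1 - σ) - 1) / (1 - σ) ≤ X ^ (1 - σ) * Real.log X := by
        rw [div_le_iff₀ h1σ]
        nlinarith
      have hk2 : κ * ((X ^ (1 - σ) - 1) / (1 - σ)) ≤ κ * X ^ (1 - σ) * Real.log X := by
        rw [mul_assoc]
        exact mul_le_mul_of_nonneg_left hk hκ.le
      linarith
  · -- σ = 1
    intro h1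
    rw [hre, h1]
    have hb := abel_bound q hq hfin κ A θ hκ hA hθ0 hθ1 hAxiomA X hX 1 hθ1
    rw [J_eval1 hX] at hb
    calc ∑ g ∈ T, bNorm q g ^ (-(1:ℝ))
        ≤ κ * Real.log X + 1 * A / (1 - θ) := hb
      _ = κ * Real.log X + A / (1 - θ) := by ring
  · -- σ > 1
    intro h1
    rw [hre]
    have hb := abel_bound q hq hfin κ A θ hκ hA hθ0 hθ1 hAxiomA X hX σ (by linarith)
    rw [J_eval hX (ne_of_gt h1)] at hb
    have hσ1 : (0:ℝ) < σ - 1 := by linarith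
    have hσθ' : (0:ℝ) < σ - θ := by linarith
    have hy1 : X ^ (1 - σ) ≤ 1 := Real.rpow_le_one_of_one_le_of_nonpos hX (by linarith)
    have hy0 : (0:ℝ) < X ^ (1 - σ) := Real.rpow_pos_of_pos hX0 _
    have hJeq : (X ^ (1 - σ) - 1) / (1 - σ) = (1 - X ^ (1 - σ)) / (σ - 1) := by
      rw [div_eq_div_iff (by linarith) (by linarith)]
      ring
    rw [hJeq] at hb
    refine le_min ?_ ?_
    · have hA2 : σ * A / (σ - θ) ≤ σ * A / (σ - 1) := by
        apply div_le_div_of_nonneg_left (by nlinarith) hσ1 (by linarith)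
      have hk : κ * ((1 - X ^ (1 - σ)) / (σ - 1)) + σ * A / (σ - 1)
          ≤ σ * (A + κ) / (σ - 1) := by
        rw [mul_div_assoc', ← add_div]
        exact (div_le_div_iff_of_pos_right hσ1).mpr (by nlinarith)
      linarith
    · have hlog : Real.log (X ^ (1 - σ)) ≤ X ^ (1 - σ) - 1 :=
        Real.log_le_sub_one_of_pos hy0
      rw [Real.log_rpow hX0] at hlog
      have hJle : (1 - X ^ (1 - σ)) / (σ - 1) ≤ Real.log X := by
        rw [div_le_iff₀ hσ1]
        nlinarith
      have hk : κ * ((1 - X ^ (1 - σ)) / (σ - 1)) ≤ κ * Real.log X :=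
        mul_le_mul_of_nonneg_left hJle hκ.le
      linarith
end

section
/- For every complex s = σ + it with θ < σ = Re s ≤ 4, |t| ≤ 9 and s ≠ 1 one has |ζ(s)·(s−1) − κ| ≤ A·|s|·|s−1|/(σ−θ) ≤ 100·A/(σ−θ). As a consequence, ζ(s) ≠ 0 for every s ≠ 1 with Re s > θ and |s − 1| ≤ κ·(1−θ)/(A+κ). -/
open scoped BigOperators Real

open MeasureTheory in
/-- Main estimate: `|ζ(s)(s-1) - κ| ≤ A |s| |s-1| / (Re s - θ)`. -/
lemma beurling_key_estimate (q : ℕ → ℝ) (κ A θ : ℝ) (hA : 0 < A)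
    (hAxiomA : ∀ x : ℝ, 1 ≤ x → |bR q κ x| ≤ A * x ^ θ)
    (s : ℂ) (hs : θ < s.re) (hs1 : s ≠ 1) :
    ‖bZeta q κ s * (s - 1) - (κ : ℂ)‖ ≤
      A * ‖s‖ * ‖s - 1‖ / (s.re - θ) := by
  have hs1' : s - 1 ≠ 0 := sub_ne_zero.mpr hs1
  set I : ℂ := ∫ x in Set.Ioi (1 : ℝ), (bR q κ x : ℂ) * (x : ℂ) ^ (-s - 1) with hI
  have heq : bZeta q κ s * (s - 1) - (κ : ℂ) = s * (s - 1) * I := by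
    rw [bZeta]
    field_simp
    ring
  have hg : IntegrableOn (fun x : ℝ => A * x ^ (θ - s.re - 1)) (Set.Ioi 1) :=
    (integrableOn_Ioi_rpow_of_lt (by linarith) one_pos).const_mul A
  have hbound : ∀ᵐ x ∂(volume.restrict (Set.Ioi (1:ℝ))),
      ‖(bR q κ x : ℂ) * (x : ℂ) ^ (-s - 1)‖ ≤ A * x ^ (θ - s.re - 1) := by
    rw [ae_restrict_iff' measurableSet_Ioi]
    filter_upwards with x hx
    have hx0 : (0:ℝ) < x := lt_trans one_pos hx
    rw [norm_mul, Complex.norm_real, Real.norm_eq_abs,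
      Complex.norm_cpow_eq_rpow_re_of_pos hx0]
    have h1 : (-s - 1).re = -s.re - 1 := by simp
    rw [h1]
    calc |bR q κ x| * x ^ (-s.re - 1) ≤ (A * x ^ θ) * x ^ (-s.re - 1) :=
          mul_le_mul_of_nonneg_right (hAxiomA x hx.le) (Real.rpow_nonneg hx0.le _)
      _ = A * x ^ (θ - s.re - 1) := by
          rw [mul_assoc, ← Real.rpow_add hx0]; ring_nf
  have hInorm : ‖I‖ ≤ A / (s.re - θ) := by
    calc ‖I‖ ≤ ∫ x in Set.Ioi (1:ℝ), A * x ^ (θ - s.re - 1) :=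
          norm_integral_le_of_norm_le hg hbound
      _ = A / (s.re - θ) := by
          rw [integral_const_mul, integral_Ioi_rpow_of_lt (by linarith) one_pos, Real.one_rpow,
            show θ - s.re - 1 + 1 = -(s.re - θ) by ring, neg_div, div_neg, neg_neg, mul_one_div]
  rw [heq, norm_mul, norm_mul, div_eq_mul_one_div]
  calc ‖s‖ * ‖s - 1‖ * ‖I‖
      ≤ ‖s‖ * ‖s - 1‖ * (A / (s.re - θ)) :=
        mul_le_mul_of_nonneg_left hInorm (by positivity)
    _ = A * ‖s‖ * ‖s - 1‖ * (1 / (s.re - θ)) := by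
        field_simp

/-- Strict inequality used for nonvanishing near `s = 1`. -/
lemma beurling_strict_ineq (A θ κ : ℝ) (hA : 0 < A) (hκ : 0 < κ) (hθ0 : 0 < θ) (hθ1 : θ < 1)
    (s : ℂ) (hs1 : s ≠ 1) (hs : θ < s.re)
    (hball : ‖s - 1‖ ≤ κ * (1 - θ) / (A + κ)) :
    A * ‖s‖ * ‖s - 1‖ < κ * (s.re - θ) := by
  set r := ‖s - 1‖ with hr
  set u := s.re - 1 with hu
  have hr0 : 0 < r := by
    rw [hr]; exact norm_pos_iff.mpr (sub_ne_zero.mpr hs1)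
  have hAκ : 0 < A + κ := by linarith
  have hκD : r * (A + κ) ≤ κ * (1 - θ) := (le_div_iff₀ hAκ).mp hball
  have hr1 : r < 1 := by nlinarith
  have hu_ge : -r ≤ u := by
    have h : |(s - 1).re| ≤ r := Complex.abs_re_le_norm (s - 1)
    simp only [Complex.sub_re, Complex.one_re] at h
    have := abs_le.mp h
    linarith [this.1]
  have hrsq : r ^ 2 = u ^ 2 + s.im ^ 2 := by
    rw [hr, Complex.sq_norm, Complex.normSq_apply]; simp [hu]; ring
  have hssq : ‖s‖ ^ 2 = 1 + 2 * u + r ^ 2 := by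
    rw [Complex.sq_norm, Complex.normSq_apply, hrsq]; simp [hu]; ring
  have hXpos : (0:ℝ) < 1 + u + r ^ 2 / 2 := by nlinarith
  have hsle : ‖s‖ ≤ 1 + u + r ^ 2 / 2 := by
    nlinarith [norm_nonneg s, sq_nonneg (u + r ^ 2 / 2)]
  have hAr : A * r < κ := by nlinarith
  have hgoal : A * (1 + u + r ^ 2 / 2) * r < κ * ((1 - θ) + u) := by
    nlinarith [mul_nonneg (sub_nonneg.mpr hAr.le) (by linarith : (0:ℝ) ≤ u + r),
      mul_pos (mul_pos hA (mul_pos hr0 hr0)) (by linarith : (0:ℝ) < 2 - r)]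
  have hre : s.re - θ = (1 - θ) + u := by rw [hu]; ring
  rw [hre]
  calc A * ‖s‖ * r ≤ A * (1 + u + r ^ 2 / 2) * r :=
        mul_le_mul_of_nonneg_right (mul_le_mul_of_nonneg_left hsle hA.le) hr0.le
    _ < κ * ((1 - θ) + u) := hgoal

theorem statement_9
    (q : ℕ → ℝ) (hq : ∀ i, 1 < q i)
    (hfin : ∀ x : ℝ, {g : ℕ →₀ ℕ | bNorm q g ≤ x}.Finite)
    (κ A θ : ℝ) (hκ : 0 < κ) (hA : 0 < A) (hθ0 : 0 < θ) (hθ1 : θ < 1)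
    (hAxiomA : ∀ x : ℝ, 1 ≤ x → |bR q κ x| ≤ A * x ^ θ)
    :
    (∀ s : ℂ, θ < s.re → s.re ≤ 4 → |s.im| ≤ 9 → s ≠ 1 →
      ‖bZeta q κ s * (s - 1) - (κ : ℂ)‖ ≤
          A * ‖s‖ * ‖s - 1‖ / (s.re - θ) ∧
        A * ‖s‖ * ‖s - 1‖ / (s.re - θ) ≤ 100 * A / (s.re - θ)) ∧
    (∀ s : ℂ, s ≠ 1 → θ < s.re → ‖s - 1‖ ≤ κ * (1 - θ) / (A + κ) →
      bZeta q κ s ≠ 0) := by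
  constructor
  · intro s hs h4 h9 hs1
    refine ⟨beurling_key_estimate q κ A θ hA hAxiomA s hs hs1, ?_⟩
    have hσθ : 0 < s.re - θ := by linarith
    have h1 : ‖s‖ ^ 2 = s.re ^ 2 + s.im ^ 2 := by
      rw [Complex.sq_norm, Complex.normSq_apply]; ring
    have h2 : ‖s - 1‖ ^ 2 = (s.re - 1) ^ 2 + s.im ^ 2 := by
      rw [Complex.sq_norm, Complex.normSq_apply]; simp; ring
    have him : s.im ^ 2 ≤ 81 := by nlinarith [abs_nonneg s.im, sq_abs s.im]
    have ha : ‖s‖ ^ 2 ≤ 97 := by nlinarith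
    have hb : ‖s - 1‖ ^ 2 ≤ 90 := by nlinarith
    have hprod : ‖s‖ * ‖s - 1‖ ≤ 100 := by
      nlinarith [norm_nonneg s, norm_nonneg (s - 1),
        mul_nonneg (norm_nonneg s) (norm_nonneg (s - 1))]
    rw [div_le_div_iff_of_pos_right hσθ]
    nlinarith [norm_nonneg s, norm_nonneg (s - 1)]
  · intro s hs1 hs hball hzero
    have hσθ : 0 < s.re - θ := by linarith
    have hkey := beurling_key_estimate q κ A θ hA hAxiomA s hs hs1
    rw [hzero, zero_mul, zero_sub, norm_neg, Complex.norm_real, Real.norm_eq_abs,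
      abs_of_pos hκ] at hkey
    have hstrict := beurling_strict_ineq A θ κ hA hκ hθ0 hθ1 s hs1 hs hball
    have h := (le_div_iff₀ hσθ).mp hkey
    linarith
end

section
/- Let L ≥ 1 and λ ≥ 1 be real numbers and set I = (1/(2π)) · ∫_{−∞}^{∞} exp( (3 + it)²/L + λ·(3 + it) ) / (3 + it) dt (the integral of (1/s)·exp(s²/L + λs) over the vertical line Re s = 3, divided by 2πi). Then |I − 1| ≤ (1/(2·√(π·L))) · e^(−(λ−1)·L). -/
open scoped Real
open MeasureTheory Set Filter Real

lemma laplace_aux (s c : ℂ) (hre : 0 < s.re) :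
    ∫ x in Ioi (0:ℝ), Complex.exp (c - s * x) = Complex.exp c / s := by
  have hs : s ≠ 0 := by
    intro h; rw [h] at hre; simp at hre
  have hderiv : ∀ x ∈ Ici (0:ℝ), HasDerivAt (fun x : ℝ => -Complex.exp (c - s * x) / s)
      (Complex.exp (c - s * x)) x := by
    intro x _
    have h1 : HasDerivAt (fun x : ℝ => c - s * (x:ℂ)) (-s) x := by
      simpa using ((Complex.ofRealCLM.hasDerivAt (x := x)).const_mul s).const_sub c
    have h2 := (h1.cexp.neg.div_const s)
    refine h2.congr_deriv ?_
    field_simp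
  have hint : IntegrableOn (fun x : ℝ => Complex.exp (c - s * x)) (Ioi 0) := by
    apply Integrable.mono' (g := fun x : ℝ => Real.exp c.re * Real.exp (-s.re * x))
      ((exp_neg_integrableOn_Ioi 0 hre).const_mul _)
    · exact (Complex.continuous_exp.comp (by continuity)).aestronglyMeasurable
    · filter_upwards with x
      rw [Complex.norm_exp, ← Real.exp_add]
      simp [Complex.sub_re, Complex.mul_re]
  have htend : Tendsto (fun x : ℝ => -Complex.exp (c - s * x) / s) atTop (nhds 0) := by
    apply squeeze_zero_norm (a := fun x : ℝ => Real.exp c.re / ‖s‖ * Real.exp (-s.re * x))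
    · intro x
      rw [norm_div, norm_neg, Complex.norm_exp,
        div_mul_eq_mul_div, ← Real.exp_add]
      apply le_of_eq
      congr 1
      simp only [Complex.sub_re, Complex.ofReal_re, Complex.ofReal_im, Complex.mul_re]
      ring
    · rw [show (0:ℝ) = Real.exp c.re / ‖s‖ * 0 by ring]
      apply Tendsto.const_mul
      have h3 : Tendsto (fun x : ℝ => -s.re * x) atTop atBot :=
        tendsto_id.const_mul_atTop_of_neg (neg_lt_zero.mpr hre)
      exact Real.tendsto_exp_atBot.comp h3
  have := integral_Ioi_of_hasDerivAt_of_tendsto' hderiv hint htend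
  rw [this]
  simp [neg_div]

lemma gauss_line {L : ℝ} (hL : 0 < L) (a : ℝ) :
    ∫ t : ℝ, Complex.exp ((3 + t * Complex.I) ^ 2 / (L : ℂ) + (a : ℂ) * (3 + t * Complex.I))
      = ((Real.sqrt (π * L) * Real.exp (-(a ^ 2 * L) / 4) : ℝ) : ℂ) := by
  have hL0 : (L : ℂ) ≠ 0 := by exact_mod_cast hL.ne'
  have hb : (-(1/(L:ℂ))).re < 0 := by
    simp [Complex.div_re, Complex.normSq]
    positivity
  have key := integral_cexp_quadratic hb (Complex.I * (6/L + a)) (9/L + 3*a)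
  have heq : ∀ t : ℝ, (3 + (t:ℂ) * Complex.I) ^ 2 / (L : ℂ) + (a : ℂ) * (3 + t * Complex.I)
      = (-(1/(L:ℂ))) * (t:ℂ)^2 + (Complex.I * (6/L + a)) * t + (9/L + 3*a) := by
    intro t
    have : (Complex.I:ℂ)^2 = -1 := Complex.I_sq
    field_simp
    ring_nf
    rw [Complex.I_sq]
    ring
  rw [show (∫ t : ℝ, Complex.exp ((3 + t * Complex.I) ^ 2 / (L : ℂ) + (a : ℂ) * (3 + t * Complex.I)))
      = ∫ t : ℝ, Complex.exp ((-(1/(L:ℂ))) * (t:ℂ)^2 + (Complex.I * (6/L + a)) * t + (9/L + 3*a)) by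
    congr 1; funext t; rw [heq t], key]
  have h1 : ((π:ℂ) / -(-(1/(L:ℂ)))) = ((π * L : ℝ) : ℂ) := by
    push_cast; field_simp
  have h2 : ((π * L : ℝ) : ℂ) ^ (1/2 : ℂ) = ((Real.sqrt (π * L) : ℝ) : ℂ) := by
    rw [show ((1:ℂ)/2) = ((1/2 : ℝ) : ℂ) by norm_num, ← Complex.ofReal_cpow (by positivity),
      Real.sqrt_eq_rpow]
  have h3 : (9/L + 3*(a:ℂ)) - (Complex.I * (6/L + a))^2 / (4 * (-(1/(L:ℂ)))) = ((-(a^2*L)/4 : ℝ) : ℂ) := by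
    have : (Complex.I:ℂ)^2 = -1 := Complex.I_sq
    push_cast
    field_simp
    ring_nf
    rw [Complex.I_sq]
    ring
  rw [h1, h2, h3, ← Complex.ofReal_exp, ← Complex.ofReal_mul]

lemma exp_int (L : ℝ) (hL : 0 < L) : ∫ x in Ioi (0:ℝ), Real.exp (-L * x) = 1 / L := by
  have hderiv : ∀ x ∈ Ici (0:ℝ), HasDerivAt (fun x : ℝ => -Real.exp (-L * x) / L)
      (Real.exp (-L * x)) x := by
    intro x _
    have h1 : HasDerivAt (fun x : ℝ => -L * x) (-L) x := by
      simpa using (hasDerivAt_id x).const_mul (-L)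
    have h2 := h1.exp.neg.div_const L
    refine h2.congr_deriv ?_
    field_simp
  have htend : Tendsto (fun x : ℝ => -Real.exp (-L * x) / L) atTop (nhds 0) := by
    rw [show (0:ℝ) = -0 / L by simp]
    apply Tendsto.div_const
    apply Tendsto.neg
    exact Real.tendsto_exp_atBot.comp (tendsto_id.const_mul_atTop_of_neg (neg_lt_zero.mpr hL))
  have := integral_Ioi_of_hasDerivAt_of_tendsto' hderiv (exp_neg_integrableOn_Ioi 0 hL) htend
  rw [this]
  simp [neg_div]

theorem statement_19 (L lam : ℝ) (hL : 1 ≤ L) (hlam : 1 ≤ lam) :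
    ‖((1 / (2 * Real.pi) : ℂ) *
        (∫ t : ℝ, Complex.exp ((3 + t * Complex.I) ^ 2 / (L : ℂ) +
          (lam : ℂ) * (3 + t * Complex.I)) / (3 + t * Complex.I)) - 1)‖ ≤
      1 / (2 * Real.sqrt (Real.pi * L)) * Real.exp (-(lam - 1) * L) := by
  have hL0 : (0:ℝ) < L := lt_of_lt_of_le one_pos hL
  have hre : ∀ t : ℝ, (0:ℝ) < (3 + (t:ℂ) * Complex.I).re := by
    intro t; simp
  -- Step A: Laplace representation of 1/s
  have stepA : ∀ t : ℝ, Complex.exp ((3 + (t:ℂ) * Complex.I) ^ 2 / (L : ℂ) +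
        (lam : ℂ) * (3 + t * Complex.I)) / (3 + t * Complex.I)
      = ∫ x in Ioi (0:ℝ), Complex.exp (((3 + (t:ℂ) * Complex.I) ^ 2 / (L : ℂ) +
        (lam : ℂ) * (3 + t * Complex.I)) - (3 + t * Complex.I) * x) :=
    fun t => (laplace_aux _ _ (hre t)).symm
  -- Product integrability for Fubini
  have hProd : Integrable (Function.uncurry fun t x : ℝ =>
      Complex.exp (((3 + (t:ℂ) * Complex.I) ^ 2 / (L : ℂ) +
        (lam : ℂ) * (3 + t * Complex.I)) - (3 + t * Complex.I) * x))
      (volume.prod (volume.restrict (Ioi 0))) := by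
    have h1 : Integrable (fun t : ℝ => Real.exp (9/L + 3*lam) * Real.exp (-(1/L) * t^2))
        volume := (integrable_exp_neg_mul_sq (by positivity)).const_mul _
    have h2 : Integrable (fun x : ℝ => Real.exp (-3 * x)) (volume.restrict (Ioi 0)) :=
      exp_neg_integrableOn_Ioi 0 (by norm_num)
    apply Integrable.mono' (h1.mul_prod h2)
    · apply Continuous.aestronglyMeasurable
      apply Complex.continuous_exp.comp
      continuity
    · filter_upwards with p
      have hz : ((3 + (p.1:ℂ) * Complex.I) ^ 2 / (L : ℂ) +
            (lam : ℂ) * (3 + p.1 * Complex.I)) - (3 + p.1 * Complex.I) * p.2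
          = ((9 - p.1^2)/L + 3*lam - 3*p.2 : ℝ) +
            ((6*p.1)/L + lam*p.1 - p.1*p.2 : ℝ) * Complex.I := by
        have hLne : (L:ℂ) ≠ 0 := by exact_mod_cast hL0.ne'
        push_cast
        field_simp
        ring_nf
        rw [Complex.I_sq]
        ring
      rw [Function.uncurry, hz, Complex.norm_exp]
      simp only [Complex.add_re, Complex.ofReal_re, Complex.mul_re, Complex.ofReal_im,
        Complex.I_re, Complex.I_im]
      apply le_of_eq
      rw [← Real.exp_add, ← Real.exp_add]
      congr 1
      field_simp
      ring
  -- Fubini swap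
  have hswap : (∫ t : ℝ, Complex.exp ((3 + (t:ℂ) * Complex.I) ^ 2 / (L : ℂ) +
        (lam : ℂ) * (3 + t * Complex.I)) / (3 + t * Complex.I))
      = ∫ x in Ioi (0:ℝ), ∫ t : ℝ, Complex.exp (((3 + (t:ℂ) * Complex.I) ^ 2 / (L : ℂ) +
        (lam : ℂ) * (3 + t * Complex.I)) - (3 + t * Complex.I) * x) := by
    rw [show (fun t : ℝ => Complex.exp ((3 + (t:ℂ) * Complex.I) ^ 2 / (L : ℂ) +
        (lam : ℂ) * (3 + t * Complex.I)) / (3 + t * Complex.I))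
      = fun t : ℝ => ∫ x in Ioi (0:ℝ), Complex.exp (((3 + (t:ℂ) * Complex.I) ^ 2 / (L : ℂ) +
        (lam : ℂ) * (3 + t * Complex.I)) - (3 + t * Complex.I) * x) from funext stepA]
    exact integral_integral_swap hProd
  -- Step C: inner Gaussian integral
  have stepC : ∀ x : ℝ, (∫ t : ℝ, Complex.exp (((3 + (t:ℂ) * Complex.I) ^ 2 / (L : ℂ) +
        (lam : ℂ) * (3 + t * Complex.I)) - (3 + t * Complex.I) * x))
      = ((Real.sqrt (π * L) * Real.exp (-((lam - x) ^ 2 * L) / 4) : ℝ) : ℂ) := by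
    intro x
    rw [show (fun t : ℝ => Complex.exp (((3 + (t:ℂ) * Complex.I) ^ 2 / (L : ℂ) +
          (lam : ℂ) * (3 + t * Complex.I)) - (3 + t * Complex.I) * x))
        = fun t : ℝ => Complex.exp ((3 + (t:ℂ) * Complex.I) ^ 2 / (L : ℂ) +
          ((lam - x : ℝ) : ℂ) * (3 + t * Complex.I)) from funext fun t => by
      congr 1; push_cast; ring]
    exact gauss_line hL0 (lam - x)
  set J : ℝ := ∫ x in Ioi (0:ℝ), Real.exp (-((lam - x) ^ 2 * L) / 4) with hJ
  have hIntEq : (∫ t : ℝ, Complex.exp ((3 + (t:ℂ) * Complex.I) ^ 2 / (L : ℂ) +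
        (lam : ℂ) * (3 + t * Complex.I)) / (3 + t * Complex.I))
      = ((Real.sqrt (π * L) * J : ℝ) : ℂ) := by
    rw [hswap]
    rw [show (fun x : ℝ => ∫ t : ℝ, Complex.exp (((3 + (t:ℂ) * Complex.I) ^ 2 / (L : ℂ) +
        (lam : ℂ) * (3 + t * Complex.I)) - (3 + t * Complex.I) * x))
      = fun x : ℝ => ((Real.sqrt (π * L) * Real.exp (-((lam - x) ^ 2 * L) / 4) : ℝ) : ℂ) from
      funext stepC]
    rw [show (∫ x in Ioi (0:ℝ), ((Real.sqrt (π * L) * Real.exp (-((lam - x) ^ 2 * L) / 4) : ℝ) : ℂ))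
      = ((∫ x in Ioi (0:ℝ), Real.sqrt (π * L) * Real.exp (-((lam - x) ^ 2 * L) / 4) : ℝ) : ℂ) from
      integral_ofReal, hJ, integral_const_mul]
  -- real-side analysis
  have h0 : Integrable (fun x : ℝ => Real.exp (-(L/4) * x^2)) :=
    integrable_exp_neg_mul_sq (by positivity)
  have hfun : Integrable (fun x : ℝ => Real.exp (-((lam - x) ^ 2 * L) / 4)) := by
    have := h0.comp_sub_right lam
    convert this using 2 with x
    congr 1
    ring
  have hTotal : (∫ x : ℝ, Real.exp (-((lam - x) ^ 2 * L) / 4)) = Real.sqrt (π / (L/4)) := by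
    calc (∫ x : ℝ, Real.exp (-((lam - x) ^ 2 * L) / 4))
        = ∫ x : ℝ, (fun y : ℝ => Real.exp (-(L/4) * y^2)) (x - lam) := by
          congr 1; funext x; congr 1; ring
      _ = ∫ x : ℝ, Real.exp (-(L/4) * x^2) := integral_sub_right_eq_self (μ := volume) (fun y : ℝ => Real.exp (-(L/4) * y^2)) lam
      _ = Real.sqrt (π / (L/4)) := integral_gaussian _
  set K : ℝ := ∫ x in Iic (0:ℝ), Real.exp (-((lam - x) ^ 2 * L) / 4) with hK
  have hsplit : J + K = Real.sqrt (π / (L/4)) := by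
    rw [hJ, hK, ← hTotal, ← compl_Ioi]
    exact integral_add_compl measurableSet_Ioi hfun
  have hK0 : 0 ≤ K :=
    setIntegral_nonneg measurableSet_Iic (fun x _ => (Real.exp_pos _).le)
  have hKrefl : K = ∫ x in Ioi (0:ℝ), Real.exp (-((lam + x) ^ 2 * L) / 4) := by
    rw [hK, ← neg_zero, ← integral_comp_neg_Ioi]
    simp only [sub_neg_eq_add, neg_zero]
  have hKle : K ≤ Real.exp (-(lam - 1) * L) / L := by
    rw [hKrefl]
    have hmono : (∫ x in Ioi (0:ℝ), Real.exp (-((lam + x) ^ 2 * L) / 4))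
        ≤ ∫ x in Ioi (0:ℝ), Real.exp (-(lam - 1) * L) * Real.exp (-L * x) := by
      apply setIntegral_mono_on
      · have := h0.comp_add_right lam
        have h' : Integrable (fun x : ℝ => Real.exp (-((lam + x) ^ 2 * L) / 4)) := by
          convert this using 2 with x
          congr 1
          ring
        exact h'.integrableOn
      · exact (exp_neg_integrableOn_Ioi 0 hL0).const_mul _
      · exact measurableSet_Ioi
      · intro x _
        rw [← Real.exp_add]
        apply Real.exp_le_exp.mpr
        nlinarith [mul_nonneg hL0.le (sq_nonneg (lam + x - 2))]
    rw [integral_const_mul, exp_int L hL0, mul_one_div] at hmono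
    exact hmono
  -- final computation
  rw [hIntEq]
  have hc0 : (0:ℝ) < Real.sqrt (π * L) := Real.sqrt_pos.mpr (by positivity)
  have hss : Real.sqrt (π * L) * Real.sqrt (π * L) = π * L :=
    Real.mul_self_sqrt (by positivity)
  have hcT : Real.sqrt (π * L) / (2 * π) * Real.sqrt (π / (L/4)) = 1 := by
    rw [div_mul_eq_mul_div, ← Real.sqrt_mul (by positivity)]
    rw [show π * L * (π / (L/4)) = (2*π)^2 by field_simp; ring]
    rw [Real.sqrt_sq (by positivity)]
    field_simp
  have hrepr : (1 / (2 * (π:ℝ)) : ℂ) * ((Real.sqrt (π * L) * J : ℝ) : ℂ) - 1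
      = ((Real.sqrt (π * L) / (2 * π) * J - 1 : ℝ) : ℂ) := by
    push_cast
    ring
  rw [hrepr, Complex.norm_real, Real.norm_eq_abs]
  have hval : Real.sqrt (π * L) / (2 * π) * J - 1 = -(Real.sqrt (π * L) / (2 * π) * K) := by
    have hJval : J = Real.sqrt (π / (L/4)) - K := by linarith [hsplit]
    rw [hJval]
    linear_combination hcT
  rw [hval, abs_neg, abs_of_nonneg (mul_nonneg (by positivity) hK0)]
  have hfinal : Real.sqrt (π * L) / (2 * π) * (Real.exp (-(lam - 1) * L) / L)
      = 1 / (2 * Real.sqrt (π * L)) * Real.exp (-(lam - 1) * L) := by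
    have h1 : Real.sqrt (π * L) / (2 * π) / L = 1 / (2 * Real.sqrt (π * L)) := by
      rw [div_div, eq_div_iff (by positivity), div_mul_eq_mul_div, div_eq_one_iff_eq (by positivity)]
      linear_combination 2 * hss
    calc Real.sqrt (π * L) / (2 * π) * (Real.exp (-(lam - 1) * L) / L)
        = (Real.sqrt (π * L) / (2 * π) / L) * Real.exp (-(lam - 1) * L) := by ring
      _ = 1 / (2 * Real.sqrt (π * L)) * Real.exp (-(lam - 1) * L) := by rw [h1]
  calc Real.sqrt (π * L) / (2 * π) * K
      ≤ Real.sqrt (π * L) / (2 * π) * (Real.exp (-(lam - 1) * L) / L) :=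
        mul_le_mul_of_nonneg_left hKle (by positivity)
    _ = 1 / (2 * Real.sqrt (π * L)) * Real.exp (-(lam - 1) * L) := hfinal
end
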